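/- arXiv:0711.0719 — 3 statements merged into one kernel-verified Lean document; each statement's English description precedes it below -/
import Mathlib

section
/- Let 0 < β < 1/2, h_n = (log n)^{−β}, and let c > 0 and ρ > 1 be constants. Then (exp(1/(2h_n²))/h_n) · exp(−c·n·exp(−1/h_n²)) · n^{ρ−1} → 0 as n → ∞; equivalently, exp((log n)^{2β}/2)·(log n)^{β}·exp(−c·n·exp(−(log n)^{2β}))·n^{ρ−1} → 0. -/
open Filter

/-- For `0 < β < 1/2`, `hₙ = (log n)^{-β}`, `c > 0` and `ρ > 1`,
`(exp(1/(2hₙ²))/hₙ) exp(-c n exp(-1/hₙ²)) n^{ρ-1} → 0` as `n → ∞`. -/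
theorem exp_inv_bandwidth_mul_exp_neg_tendsto_zero
    (β c ρ : ℝ) (hβ : 0 < β) (hβ' : β < 1 / 2) (hc : 0 < c) (hρ : 1 < ρ)
    (h : ℕ → ℝ) (hh : ∀ n : ℕ, h n = Real.log n ^ (-β)) :
    Tendsto (fun n : ℕ =>
        Real.exp (1 / (2 * h n ^ 2)) / h n *
          Real.exp (-(c * n * Real.exp (-(1 / h n ^ 2)))) * (n : ℝ) ^ (ρ - 1))
      atTop (nhds 0) := by
  set M : ℝ := 1/2 + β + (ρ - 1) with hM
  set g : ℝ → ℝ := fun t =>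
    t ^ (2*β) / 2 + β * Real.log t - c * Real.exp (t - t ^ (2*β)) + (ρ-1) * t with hg
  -- key exponential domination
  have a2 : Tendsto (fun t : ℝ => t / 2) atTop atTop :=
    tendsto_id.atTop_div_const two_pos
  have a1 : Tendsto (fun s : ℝ => s * Real.exp (-s)) atTop (nhds 0) := by
    simpa using Real.tendsto_pow_mul_exp_neg_atTop_nhds_zero 1
  have a3 : Tendsto (fun t : ℝ => t * Real.exp (-(t/2))) atTop (nhds 0) := by
    have := ((a1.comp a2).const_mul (2:ℝ))
    simp only [mul_zero] at this
    refine this.congr fun t => ?_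
    simp only [Function.comp]
    ring
  have key : Tendsto (fun t : ℝ => c * Real.exp (t/2) - M * t) atTop atTop := by
    have h2 : Tendsto (fun t : ℝ => c - M * (t * Real.exp (-(t/2)))) atTop (nhds c) := by
      have := (a3.const_mul M).const_sub c
      simpa using this
    have h3 : Tendsto (fun t : ℝ => Real.exp (t/2) * (c - M * (t * Real.exp (-(t/2)))))
        atTop atTop :=
      Filter.Tendsto.atTop_mul_pos hc (Real.tendsto_exp_atTop.comp a2) h2
    refine h3.congr fun t => ?_
    have hee : Real.exp (t/2) * Real.exp (-(t/2)) = 1 := by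
      rw [← Real.exp_add]; simp
    linear_combination (-(M*t)) * hee
  have hgbot : Tendsto g atTop atBot := by
    have hneg : Tendsto (fun t : ℝ => M * t - c * Real.exp (t/2)) atTop atBot := by
      have := tendsto_neg_atTop_atBot.comp key
      refine this.congr fun t => ?_
      simp only [Function.comp_apply, neg_sub]
    have hbound : g ≤ᶠ[atTop] fun t => M * t - c * Real.exp (t/2) := by
      have hsmall : Tendsto (fun t : ℝ => t ^ (-(1 - 2*β))) atTop (nhds 0) :=
        tendsto_rpow_neg_atTop (by linarith)
      filter_upwards [eventually_ge_atTop (1:ℝ),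
        hsmall.eventually_lt_const (by norm_num : (0:ℝ) < 1/2)] with t ht1 ht2
      have ht0 : (0:ℝ) < t := by linarith
      have hpow : t ^ (2*β) = t ^ (-(1 - 2*β)) * t := by
        have h' := Real.rpow_add ht0 (-(1 - 2*β)) 1
        rw [Real.rpow_one] at h'
        rw [← h']
        congr 1
        ring
      have hpow2 : t ^ (2*β) ≤ t / 2 := by
        rw [hpow]
        calc t ^ (-(1 - 2*β)) * t ≤ (1/2) * t :=
              mul_le_mul_of_nonneg_right ht2.le ht0.le
          _ = t / 2 := by ring
      have hpownn : 0 ≤ t ^ (2*β) := Real.rpow_nonneg ht0.le _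
      have hlog : Real.log t ≤ t := (Real.log_le_sub_one_of_pos ht0).trans (by linarith)
      have hexp : Real.exp (t/2) ≤ Real.exp (t - t ^ (2*β)) :=
        Real.exp_le_exp.2 (by linarith)
      have hblog : β * Real.log t ≤ β * t := mul_le_mul_of_nonneg_left hlog hβ.le
      have hcexp : c * Real.exp (t/2) ≤ c * Real.exp (t - t ^ (2*β)) :=
        mul_le_mul_of_nonneg_left hexp hc.le
      simp only [hg, hM]
      linarith
    exact tendsto_atBot_mono' atTop hbound hneg
  have hL : Tendsto (fun n : ℕ => Real.log n) atTop atTop :=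
    Real.tendsto_log_atTop.comp tendsto_natCast_atTop_atTop
  have hmain : Tendsto (fun n : ℕ => Real.exp (g (Real.log n))) atTop (nhds 0) :=
    Real.tendsto_exp_atBot.comp (hgbot.comp hL)
  refine hmain.congr' ?_
  filter_upwards [hL.eventually (eventually_gt_atTop (1:ℝ)),
    eventually_gt_atTop 0] with n hn hn0
  have hn0' : (0:ℝ) < n := by exact_mod_cast hn0
  set L := Real.log n with hLdef
  have hL0 : (0:ℝ) < L := by linarith
  have hhn : h n = L ^ (-β) := hh n
  have hhpos : 0 < h n := by rw [hhn]; exact Real.rpow_pos_of_pos hL0 _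
  have hh2 : h n ^ 2 = L ^ (-(2*β)) := by
    rw [hhn, ← Real.rpow_natCast (L ^ (-β)) 2, ← Real.rpow_mul hL0.le]
    norm_num
    ring_nf
  have hLpow : (0:ℝ) < L ^ (2*β) := Real.rpow_pos_of_pos hL0 _
  have hinv : 1 / h n ^ 2 = L ^ (2*β) := by
    rw [hh2, Real.rpow_neg hL0.le]
    field_simp
  have e1 : Real.exp (1 / (2 * h n ^ 2)) / h n
      = Real.exp (L ^ (2*β) / 2) * Real.exp (β * Real.log L) := by
    have h1 : 1 / (2 * h n ^ 2) = L ^ (2*β) / 2 := by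
      rw [hh2, Real.rpow_neg hL0.le]
      rw [div_eq_div_iff (by positivity) (by norm_num)]
      field_simp
    have h2 : (h n)⁻¹ = Real.exp (β * Real.log L) := by
      rw [hhn, Real.rpow_neg hL0.le, inv_inv, Real.rpow_def_of_pos hL0, mul_comm]
    rw [h1, div_eq_mul_inv, h2]
  have e2 : (n : ℝ) ^ (ρ - 1) = Real.exp ((ρ - 1) * L) := by
    rw [Real.rpow_def_of_pos hn0', ← hLdef, mul_comm]
  have e3 : c * n * Real.exp (-(1 / h n ^ 2)) = c * Real.exp (L - L ^ (2*β)) := by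
    rw [hinv]
    have hne : (n : ℝ) = Real.exp L := (Real.exp_log hn0').symm
    rw [hne, mul_assoc, ← Real.exp_add, ← sub_eq_add_neg]
  rw [e1, e2, e3, ← Real.exp_add, ← Real.exp_add, ← Real.exp_add]
  congr 1
end

section
/- Let φ : ℝ → ℂ be a bounded measurable function with φ(t) → 0 as |t| → ∞. Then (1/(h·exp(1/(2h²)))) · ∫_{−1/h}^{1/h} e^{t²/2} |φ(t)| dt → 0 as h → 0⁺. -/
open MeasureTheory Filter


lemma exp_sq_quarter_le (x : ℝ) (hx : 0 ≤ x) : x^2/4 ≤ Real.exp x := by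
  have h := Real.add_one_le_exp (x/2)
  have h2 : Real.exp (x/2) * Real.exp (x/2) = Real.exp x := by
    rw [← Real.exp_add]; ring_nf
  nlinarith [Real.exp_pos (x/2)]

lemma hasDerivAt_exp_half_sq (t : ℝ) :
    HasDerivAt (fun t : ℝ => Real.exp (t^2/2)) (t * Real.exp (t^2/2)) t := by
  have h1 : HasDerivAt (fun t : ℝ => t^2/2) t t := by
    have := (hasDerivAt_pow 2 t).div_const 2
    simpa using this
  have := (Real.hasDerivAt_exp (t^2/2)).comp t h1
  rw [mul_comm]; exact this

lemma key_interval (T : ℝ) :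
    ∫ t in (-T)..T, (Real.exp (t^2/2) + t^2 * Real.exp (t^2/2)) = 2*T*Real.exp (T^2/2) := by
  have hd : ∀ t ∈ Set.uIcc (-T) T, HasDerivAt (fun t : ℝ => t * Real.exp (t^2/2))
      (Real.exp (t^2/2) + t^2*Real.exp (t^2/2)) t := by
    intro t _
    have := (hasDerivAt_id t).mul (hasDerivAt_exp_half_sq t)
    refine HasDerivAt.congr_deriv this ?_
    simp only [id_eq]; ring
  have hc : Continuous fun t : ℝ => Real.exp (t^2/2) + t^2*Real.exp (t^2/2) := by continuity
  rw [intervalIntegral.integral_eq_sub_of_hasDerivAt hd (hc.intervalIntegrable _ _)]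
  have : (-T)^2 = T^2 := by ring
  rw [this]; ring

lemma lemA {T : ℝ} (hT : 6 ≤ T) :
    ∫ t in Set.Icc (-T) T, Real.exp (t^2/2) ≤ 10 / T * Real.exp (T^2/2) := by
  have hT0 : (0:ℝ) < T := by linarith
  have hle : -T ≤ T := by linarith
  have hcont1 : Continuous fun t : ℝ => Real.exp (t^2/2) := by continuity
  have hcont2 : Continuous fun t : ℝ => t^2 * Real.exp (t^2/2) := by continuity
  set J := ∫ t in Set.Icc (-T) T, Real.exp (t^2/2) with hJ
  set K := ∫ t in Set.Icc (-T) T, t^2 * Real.exp (t^2/2) with hK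
  have hJK : J + K = 2*T*Real.exp (T^2/2) := by
    rw [hJ, hK, ← integral_add hcont1.integrableOn_Icc hcont2.integrableOn_Icc,
      integral_Icc_eq_integral_Ioc, ← intervalIntegral.integral_of_le hle, key_interval]
  have hJ0 : 0 ≤ J := setIntegral_nonneg measurableSet_Icc (fun t _ => by positivity)
  have hKle : K ≤ 2*T*Real.exp (T^2/2) := by linarith
  have hmono : J ≤ ∫ t in Set.Icc (-T) T,
      (Real.exp (T^2/8) + 4/T^2 * (t^2 * Real.exp (t^2/2))) := by
    apply setIntegral_mono_on hcont1.integrableOn_Icc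
      ((continuous_const.add (continuous_const.mul hcont2)).integrableOn_Icc)
      measurableSet_Icc
    intro t _
    show Real.exp (t^2/2) ≤ Real.exp (T^2/8) + 4/T^2 * (t^2 * Real.exp (t^2/2))
    rcases le_or_gt (t^2) (T^2/4) with h | h
    · have h1 : Real.exp (t^2/2) ≤ Real.exp (T^2/8) := Real.exp_le_exp.mpr (by linarith)
      have h2 : 0 ≤ 4/T^2 * (t^2*Real.exp (t^2/2)) := by positivity
      linarith
    · have h1 : (1:ℝ) ≤ 4/T^2 * t^2 := by
        rw [div_mul_eq_mul_div, le_div_iff₀ (by positivity)]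
        nlinarith
      have h2 := Real.exp_pos (t^2/2)
      have h3 := (Real.exp_pos (T^2/8)).le
      nlinarith [mul_le_mul_of_nonneg_right h1 h2.le]
  have hsplit : (∫ t in Set.Icc (-T) T,
      (Real.exp (T^2/8) + 4/T^2 * (t^2 * Real.exp (t^2/2))))
      = Real.exp (T^2/8) * (2*T) + 4/T^2 * K := by
    rw [integral_add (f := fun _ => Real.exp (T^2/8)) (g := fun t => 4/T^2 * (t^2 * Real.exp (t^2/2))) (integrable_const _)
      (show Integrable (fun t : ℝ => 4/T^2 * (t^2 * Real.exp (t^2/2))) (volume.restrict (Set.Icc (-T) T)) from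
        (continuous_const.mul hcont2).integrableOn_Icc), setIntegral_const,
      integral_const_mul, measureReal_def, Real.volume_Icc, ← hK]
    rw [ENNReal.toReal_ofReal (by linarith), smul_eq_mul]
    ring
  have hTsq : T^2 ≤ Real.exp (3*T^2/8) := by
    have h1 := exp_sq_quarter_le (3*T^2/8) (by positivity)
    have h36 : (36:ℝ) ≤ T^2 := by nlinarith
    nlinarith [h1, mul_nonneg (sq_nonneg T) (by linarith : (0:ℝ) ≤ 9*T^2 - 256)]
  have hfact : Real.exp (3*T^2/8) * Real.exp (T^2/8) = Real.exp (T^2/2) := by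
    rw [← Real.exp_add]; ring_nf
  have hexp8 : 0 < Real.exp (T^2/8) := Real.exp_pos _
  -- 2T e^{T²/8} ≤ (2/T) e^{T²/2}
  have hterm1 : Real.exp (T^2/8) * (2*T) ≤ 2/T * Real.exp (T^2/2) := by
    rw [div_mul_eq_mul_div, le_div_iff₀ hT0, ← hfact]
    nlinarith
  have hterm2 : 4/T^2 * K ≤ 8/T * Real.exp (T^2/2) := by
    have h4 : (0:ℝ) ≤ 4/T^2 := by positivity
    have := mul_le_mul_of_nonneg_left hKle h4
    calc 4/T^2 * K ≤ 4/T^2 * (2*T*Real.exp (T^2/2)) := this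
      _ = 8/T * Real.exp (T^2/2) := by field_simp; ring
  calc J ≤ _ := hmono
    _ = Real.exp (T^2/8) * (2*T) + 4/T^2 * K := hsplit
    _ ≤ 2/T * Real.exp (T^2/2) + 8/T * Real.exp (T^2/2) := add_le_add hterm1 hterm2
    _ = 10/T * Real.exp (T^2/2) := by ring

set_option maxHeartbeats 1000000 in
/-- If `φ : ℝ → ℂ` is bounded, measurable and vanishes at infinity, then
`(1/(h exp(1/(2h²)))) ∫_{-1/h}^{1/h} e^{t²/2} |φ(t)| dt → 0` as `h → 0⁺`. -/
theorem inv_exp_mul_integral_exp_mul_vanishing_tendsto_zero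
    (φ : ℝ → ℂ) (hφ_meas : Measurable φ)
    (hφ_bdd : ∃ Cb : ℝ, ∀ t : ℝ, ‖φ t‖ ≤ Cb)
    (hφ_lim : Tendsto φ (cocompact ℝ) (nhds 0)) :
    Tendsto (fun h : ℝ =>
        1 / (h * Real.exp (1 / (2 * h ^ 2))) *
          ∫ t in Set.Icc (-(1 / h)) (1 / h), Real.exp (t ^ 2 / 2) * ‖φ t‖)
      (nhdsWithin 0 (Set.Ioi 0)) (nhds 0) := by
  rw [NormedAddCommGroup.tendsto_nhds_zero]
  intro ε hε
  obtain ⟨Cb, hCb⟩ := hφ_bdd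
  have hCb0 : 0 ≤ Cb := le_trans (norm_nonneg _) (hCb 0)
  set ε' : ℝ := ε / 20 with hε'def
  have hε'pos : 0 < ε' := by positivity
  have hmem : φ ⁻¹' Metric.ball 0 ε' ∈ cocompact ℝ :=
    hφ_lim (Metric.ball_mem_nhds 0 hε'pos)
  obtain ⟨K, hK, hKs⟩ := mem_cocompact.mp hmem
  obtain ⟨M, hM⟩ := hK.isBounded.subset_closedBall 0
  set M' : ℝ := max M 0 with hM'def
  have hM'0 : 0 ≤ M' := le_max_right _ _
  set C0 : ℝ := Real.exp (M'^2/2) * Cb with hC0def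
  have hC00 : 0 ≤ C0 := by positivity
  -- pointwise bound
  have hpt : ∀ t : ℝ, Real.exp (t^2/2) * ‖φ t‖ ≤ C0 + ε' * Real.exp (t^2/2) := by
    intro t
    rcases le_or_gt (|t|) M' with hcase | hcase
    · have h1 : Real.exp (t^2/2) ≤ Real.exp (M'^2/2) := by
        apply Real.exp_le_exp.mpr
        have h2 := abs_nonneg t
        nlinarith [sq_abs t]
      have h2 : 0 ≤ ε' * Real.exp (t^2/2) := by positivity
      have h3 := mul_le_mul h1 (hCb t) (norm_nonneg _) (Real.exp_pos _).le
      rw [hC0def]; linarith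
    · have ht : t ∉ K := by
        intro hmem'
        have h4 := hM hmem'
        rw [Metric.mem_closedBall, Real.dist_eq, sub_zero] at h4
        have : |t| ≤ M' := le_trans h4 (le_max_left _ _)
        linarith
      have h5 := hKs ht
      simp only [Set.mem_preimage, Metric.mem_ball, dist_zero_right] at h5
      have hφt : ‖φ t‖ ≤ ε' := by exact h5.le
      have h6 : Real.exp (t^2/2) * ‖φ t‖ ≤ Real.exp (t^2/2) * ε' :=
        mul_le_mul_of_nonneg_left hφt (Real.exp_pos _).le
      nlinarith [Real.exp_pos (t^2/2)]
  -- choose δ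
  set δ1 : ℝ := Real.sqrt (ε / (C0 * 256 + 2)) with hδ1def
  have hδ1pos : 0 < δ1 := Real.sqrt_pos.mpr (by positivity)
  set δ : ℝ := min (min (1/6) (1/(M'+1))) δ1 with hδdef
  have hδpos : 0 < δ := by
    apply lt_min (lt_min (by norm_num) (by positivity)) hδ1pos
  filter_upwards [Ioo_mem_nhdsGT_of_mem
    (show (0:ℝ) ∈ Set.Ico 0 δ from ⟨le_refl _, hδpos⟩)] with h hh
  obtain ⟨hh0, hhδ⟩ := hh
  set T : ℝ := 1/h with hTdef
  have hT0 : 0 < T := by positivity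
  have hh0' : h ≠ 0 := ne_of_gt hh0
  have hhT : h * T = 1 := by rw [hTdef]; field_simp
  have hT6 : 6 ≤ T := by
    have h1 : h < 1/6 := lt_of_lt_of_le hhδ (le_trans (min_le_left _ _) (min_le_left _ _))
    rw [hTdef, le_div_iff₀ hh0]; linarith
  have hTM : M' < T := by
    have h1 : h < 1/(M'+1) := lt_of_lt_of_le hhδ (le_trans (min_le_left _ _) (min_le_right _ _))
    rw [hTdef, lt_div_iff₀ hh0]
    have h2 : (M'+1) * h < 1 := by
      have h3 := mul_lt_mul_of_pos_left h1 (show (0:ℝ) < M'+1 by positivity)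
      rwa [mul_one_div_cancel (show (M'+1) ≠ 0 by positivity)] at h3
    nlinarith
  have hh2 : h^2 < ε / (C0 * 256 + 2) := by
    have h1 : h < δ1 := lt_of_lt_of_le hhδ (min_le_right _ _)
    have harg : 0 ≤ ε / (C0 * 256 + 2) := by positivity
    calc h^2 < δ1^2 := by nlinarith
      _ = ε / (C0 * 256 + 2) := Real.sq_sqrt harg
  have hexparg : 1/(2*h^2) = T^2/2 := by rw [hTdef]; field_simp
  set E : ℝ := Real.exp (T^2/2) with hEdef
  have hEpos : 0 < E := Real.exp_pos _
  set I : ℝ := ∫ t in Set.Icc (-T) T, Real.exp (t^2/2) * ‖φ t‖ with hIdef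
  have hI0 : 0 ≤ I :=
    setIntegral_nonneg measurableSet_Icc
      (fun t _ => mul_nonneg (Real.exp_pos _).le (norm_nonneg _))
  have hcont1 : Continuous fun t : ℝ => Real.exp (t^2/2) := by continuity
  -- integrability of I's integrand
  have hfm : AEStronglyMeasurable (fun t : ℝ => Real.exp (t^2/2) * ‖φ t‖)
      (volume.restrict (Set.Icc (-T) T)) :=
    (hcont1.measurable.mul ((continuous_norm.measurable).comp hφ_meas)).aestronglyMeasurable
  have hfint : IntegrableOn (fun t : ℝ => Real.exp (t^2/2) * ‖φ t‖)
      (Set.Icc (-T) T) := by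
    apply Integrable.mono' (g := fun _ => E * Cb)
      (integrableOn_const measure_Icc_lt_top.ne) hfm
    filter_upwards [ae_restrict_mem measurableSet_Icc] with t ht
    rw [Real.norm_eq_abs, abs_of_nonneg (by positivity)]
    have h1 : Real.exp (t^2/2) ≤ E := by
      rw [hEdef]
      apply Real.exp_le_exp.mpr
      obtain ⟨ht1, ht2⟩ := ht
      nlinarith
    exact mul_le_mul h1 (hCb t) (norm_nonneg _) hEpos.le
  have hgint : IntegrableOn (fun t : ℝ => C0 + ε' * Real.exp (t^2/2)) (Set.Icc (-T) T) :=
    (continuous_const.add (continuous_const.mul hcont1)).integrableOn_Icc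
  have hIle : I ≤ C0 * (2*T) + ε' * ∫ t in Set.Icc (-T) T, Real.exp (t^2/2) := by
    calc I ≤ ∫ t in Set.Icc (-T) T, (C0 + ε' * Real.exp (t^2/2)) :=
          setIntegral_mono_on hfint hgint measurableSet_Icc (fun t _ => hpt t)
      _ = C0 * (2*T) + ε' * ∫ t in Set.Icc (-T) T, Real.exp (t^2/2) := by
          rw [integral_add (f := fun _ => C0) (g := fun t => ε' * Real.exp (t^2/2)) (integrable_const _)
            ((continuous_const.mul hcont1).integrableOn_Icc), setIntegral_const,
            integral_const_mul, measureReal_def, Real.volume_Icc, ENNReal.toReal_ofReal (by linarith),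
            smul_eq_mul]
          ring
  have hJA := lemA hT6
  have hIle2 : I ≤ C0 * (2*T) + ε' * (10/T * E) := by
    refine le_trans hIle (add_le_add_right ?_ _)
    exact mul_le_mul_of_nonneg_left hJA hε'pos.le
  -- final computation
  rw [Real.norm_eq_abs, abs_of_nonneg (mul_nonneg (by positivity) hI0)]
  have hc : 1/(h * Real.exp (1/(2*h^2))) = T/E := by
    rw [hexparg, ← hEdef, hTdef]
    field_simp
  have hE16 : T^4/16 ≤ E := by
    have h1 := exp_sq_quarter_le (T^2/2) (by positivity)
    rw [hEdef]
    nlinarith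
  have hstep2 : T/E * (C0 * (2*T) + ε' * (10/T * E)) = 2*C0*T^2/E + 10*ε' := by
    field_simp
  have hstep3 : 2*C0*T^2/E ≤ 128*C0*h^2 := by
    rw [div_le_iff₀ hEpos]
    have hh2T : h^2 * T^2 = 1 := by nlinarith
    have h1 : T^4/16 * (128*C0*h^2) ≤ E * (128*C0*h^2) :=
      mul_le_mul_of_nonneg_right hE16 (by positivity)
    have h2 : T^4/16 * (128*C0*h^2) = 8*C0*(h^2*T^2)*T^2 := by ring
    rw [h2, hh2T] at h1
    nlinarith
  have hstep4 : 128*C0*h^2 + 10*ε' < ε := by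
    have h1 : h^2 * (C0*256 + 2) < ε := (lt_div_iff₀ (by positivity)).mp hh2
    have h2 : 0 < h^2 := by positivity
    rw [hε'def]
    nlinarith
  calc 1/(h * Real.exp (1/(2*h^2))) * I
      ≤ 1/(h * Real.exp (1/(2*h^2))) * (C0 * (2*T) + ε' * (10/T * E)) := by
        apply mul_le_mul_of_nonneg_left hIle2 (by positivity)
    _ = T/E * (C0 * (2*T) + ε' * (10/T * E)) := by rw [hc]
    _ = 2*C0*T^2/E + 10*ε' := hstep2
    _ ≤ 128*C0*h^2 + 10*ε' := by linarith
    _ < ε := hstep4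
end

section
/- Let c(h) = ∫_0^1 exp(x²/(2h²)) dx. Then c(h) / (h² · exp(1/(2h²))) → 1 as h → 0⁺. -/
open MeasureTheory Filter
open intervalIntegral

lemma intcalc (a : ℝ) (ha : 0 < a) : ∫ x in (0:ℝ)..1, Real.exp (2*a*x + (-a)) = (Real.exp a - Real.exp (-a)) / (2*a) := by
  rw [intervalIntegral.integral_comp_mul_add Real.exp (by positivity : (2:ℝ)*a ≠ 0) (-a)]
  rw [integral_exp]
  rw [smul_eq_mul]
  norm_num
  ring

lemma lowerb (a : ℝ) (ha : 0 < a) :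
    (Real.exp a - Real.exp (-a)) / (2*a) ≤ ∫ x in Set.Icc (0:ℝ) 1, Real.exp (a * x^2) := by
  rw [MeasureTheory.integral_Icc_eq_integral_Ioc, ← intervalIntegral.integral_of_le (by norm_num : (0:ℝ) ≤ 1)]
  rw [← intcalc a ha]
  apply intervalIntegral.integral_mono_on (by norm_num)
  · exact (Real.continuous_exp.comp (by continuity)).intervalIntegrable _ _
  · exact (Real.continuous_exp.comp (by continuity)).intervalIntegrable _ _
  · intro x hx
    apply Real.exp_le_exp.2
    nlinarith [sq_nonneg (x - 1)]


lemma upperb (a δ : ℝ) (ha : 0 < a) (hδ0 : 0 < δ) (hδ1 : δ < 1) :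
    ∫ x in Set.Icc (0:ℝ) 1, Real.exp (a * x^2) ≤
      Real.exp (a*(1-δ)^2) + Real.exp a / (a*(2-δ)) := by
  have hc : (0:ℝ) < a*(2-δ) := by nlinarith
  have hi1 : IntervalIntegrable (fun x => Real.exp (a*x^2)) volume 0 (1-δ) :=
    (Real.continuous_exp.comp (by continuity)).intervalIntegrable _ _
  have hi2 : IntervalIntegrable (fun x => Real.exp (a*x^2)) volume (1-δ) 1 :=
    (Real.continuous_exp.comp (by continuity)).intervalIntegrable _ _
  rw [MeasureTheory.integral_Icc_eq_integral_Ioc, ← intervalIntegral.integral_of_le (by norm_num : (0:ℝ) ≤ 1)]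
  rw [← intervalIntegral.integral_add_adjacent_intervals hi1 hi2]
  gcongr
  · -- first piece ≤ exp(a(1-δ)²)
    calc ∫ x in (0:ℝ)..(1-δ), Real.exp (a*x^2)
        ≤ ∫ _x in (0:ℝ)..(1-δ), Real.exp (a*(1-δ)^2) := by
          apply intervalIntegral.integral_mono_on (by linarith) hi1 (by simp)
          intro x hx
          apply Real.exp_le_exp.2
          have h1 := hx.1; have h2 := hx.2
          nlinarith [mul_nonneg ha.le (mul_nonneg (by linarith : (0:ℝ) ≤ 1-δ-x) (by linarith : (0:ℝ) ≤ 1-δ+x))]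
      _ = (1-δ) * Real.exp (a*(1-δ)^2) := by simp
      _ ≤ Real.exp (a*(1-δ)^2) := by nlinarith [Real.exp_pos (a*(1-δ)^2)]
  · -- second piece
    calc ∫ x in (1-δ:ℝ)..1, Real.exp (a*x^2)
        ≤ ∫ x in (1-δ:ℝ)..1, Real.exp (a*(2-δ)*x + a*(δ-1)) := by
          apply intervalIntegral.integral_mono_on (by linarith) hi2
            ((Real.continuous_exp.comp (by continuity)).intervalIntegrable _ _)
          intro x hx
          show Real.exp (a*x^2) ≤ Real.exp (a*(2-δ)*x + a*(δ-1))
          apply Real.exp_le_exp.2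
          have h1 := hx.1; have h2 := hx.2
          nlinarith [mul_nonneg ha.le (mul_nonneg (by linarith : (0:ℝ) ≤ 1-x) (by linarith : (0:ℝ) ≤ x-(1-δ)))]
      _ = (Real.exp a - Real.exp (a*(1-δ)^2)) / (a*(2-δ)) := by
          rw [intervalIntegral.integral_comp_mul_add Real.exp (ne_of_gt hc) (a*(δ-1))]
          rw [integral_exp, smul_eq_mul]
          rw [show a*(2-δ)*1 + a*(δ-1) = a by ring,
              show a*(2-δ)*(1-δ) + a*(δ-1) = a*(1-δ)^2 by ring]
          ring
      _ ≤ Real.exp a / (a*(2-δ)) := by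
          gcongr <;> linarith [Real.exp_pos (a*(1-δ)^2)]


lemma Fkey : Tendsto (fun a : ℝ =>
    (∫ x in Set.Icc (0:ℝ) 1, Real.exp (a * x^2)) / ((1/(2*a)) * Real.exp a))
    atTop (nhds 1) := by
  rw [Metric.tendsto_nhds]
  intro ε hε
  set δ : ℝ := min ε 1 / 2 with hδdef
  have hδ0 : 0 < δ := by positivity
  have hδ1 : δ < 1 := by
    have : min ε 1 ≤ 1 := min_le_right _ _
    simp only [hδdef]; linarith
  have hδε : δ ≤ ε/2 := by
    have : min ε 1 ≤ ε := min_le_left _ _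
    simp only [hδdef]; linarith
  have hc : 0 < δ*(2-δ) := by nlinarith
  have E2 : Tendsto (fun a : ℝ => 2*a*Real.exp (-(δ*(2-δ)*a))) atTop (nhds 0) := by
    have h1 : Tendsto (fun a : ℝ => δ*(2-δ)*a) atTop atTop :=
      Tendsto.const_mul_atTop hc tendsto_id
    have h2 := (Real.tendsto_pow_mul_exp_neg_atTop_nhds_zero 1).comp h1
    have h3 := h2.const_mul (2/(δ*(2-δ)))
    rw [mul_zero] at h3
    refine h3.congr fun a => ?_
    simp only [Function.comp, pow_one]
    have h2δ : (2:ℝ) - δ ≠ 0 := by linarith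
    field_simp
  have E3 : Tendsto (fun a : ℝ => Real.exp (-(2*a))) atTop (nhds 0) := by
    have h1 : Tendsto (fun a : ℝ => -(2*a)) atTop atBot := by
      exact tendsto_neg_atBot_iff.mpr (Tendsto.const_mul_atTop two_pos tendsto_id)
    exact Real.tendsto_exp_atBot.comp h1
  filter_upwards [eventually_gt_atTop (0:ℝ),
    E2.eventually_lt_const (by linarith : (0:ℝ) < ε/2),
    E3.eventually_lt_const hε] with a ha h2 h3
  have hD : 0 < (1/(2*a)) * Real.exp a := by positivity
  set I := ∫ x in Set.Icc (0:ℝ) 1, Real.exp (a * x^2) with hI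
  have hlow : 1 - Real.exp (-(2*a)) ≤ I / ((1/(2*a)) * Real.exp a) := by
    have h := lowerb a ha
    have heq : (1:ℝ) - Real.exp (-(2*a)) =
        ((Real.exp a - Real.exp (-a))/(2*a)) / ((1/(2*a)) * Real.exp a) := by
      have e1 : Real.exp (-(2*a)) * Real.exp a = Real.exp (-a) := by
        rw [← Real.exp_add]; ring_nf
      field_simp
      nlinarith [Real.exp_pos a]
    rw [heq]
    gcongr
  have hup : I / ((1/(2*a)) * Real.exp a) ≤ 2*a*Real.exp (-(δ*(2-δ)*a)) + 2/(2-δ) := by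
    have h := upperb a δ ha hδ0 hδ1
    have heq : (Real.exp (a*(1-δ)^2) + Real.exp a / (a*(2-δ))) / ((1/(2*a)) * Real.exp a)
        = 2*a*Real.exp (-(δ*(2-δ)*a)) + 2/(2-δ) := by
      have e1 : Real.exp (-(δ*(2-δ)*a)) * Real.exp a = Real.exp (a*(1-δ)^2) := by
        rw [← Real.exp_add]; ring_nf
      have h2δ : (2:ℝ) - δ ≠ 0 := by linarith
      rw [← e1]
      field_simp
    rw [← heq]
    gcongr
  rw [Real.dist_eq, abs_sub_lt_iff]
  constructor
  · have : 2/(2-δ) - 1 = δ/(2-δ) := by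
      rw [div_sub' (by linarith : (2:ℝ)-δ ≠ 0)]
      ring_nf
    have hd : δ/(2-δ) ≤ δ := by
      rw [div_le_iff₀ (by linarith)]
      nlinarith
    linarith
  · linarith

/-- With `c(h) = ∫_0^1 exp(x²/(2h²)) dx`, one has `c(h)/(h² exp(1/(2h²))) → 1` as
`h → 0⁺`. -/
theorem normalisation_constant_asymptotics :
    Tendsto (fun h : ℝ =>
        (∫ x in Set.Icc (0 : ℝ) 1, Real.exp (x ^ 2 / (2 * h ^ 2))) /
          (h ^ 2 * Real.exp (1 / (2 * h ^ 2))))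
      (nhdsWithin 0 (Set.Ioi 0)) (nhds 1) := by
  have hcomp : Tendsto (fun h : ℝ => 1/(2*h^2)) (nhdsWithin 0 (Set.Ioi 0)) atTop := by
    have h1 : Tendsto (fun h : ℝ => 2*h^2) (nhdsWithin 0 (Set.Ioi 0)) (nhdsWithin 0 (Set.Ioi 0)) := by
      apply tendsto_nhdsWithin_of_tendsto_nhds_of_eventually_within
      · have hco : Continuous fun h : ℝ => 2*h^2 := by continuity
        have := (hco.tendsto 0).mono_left (nhdsWithin_le_nhds (s := Set.Ioi (0:ℝ)))
        simpa using this
      · filter_upwards [self_mem_nhdsWithin] with h hh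
        have hh' : (0:ℝ) < h := hh
        simp only [Set.mem_Ioi]
        positivity
    have h2 := tendsto_inv_nhdsGT_zero.comp h1
    refine h2.congr fun h => ?_
    simp [one_div]
  have hmain := Fkey.comp hcomp
  refine hmain.congr' ?_
  filter_upwards [self_mem_nhdsWithin] with h hh
  have hh' : (0:ℝ) < h := hh
  simp only [Function.comp]
  have e1 : ∀ x : ℝ, (1/(2*h^2)) * x^2 = x^2/(2*h^2) := fun x => by ring
  have e2 : 1/(2*(1/(2*h^2))) = h^2 := by field_simp
  rw [e2]
  simp only [e1]
end
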